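/- Let B₁, B₂, B₃ be orthogonal projection operators on a Hilbert space H with B₁ + B₂ + B₃ = I (so their ranges are mutually orthogonal). Let u, v ∈ H be unit vectors with ‖B₁ u‖² = λ, ‖B₂ v‖² = λ', and B₂ u, B₁ v, B₃ u, B₃ v as determined by the decomposition. If additionally ‖B₂ u‖² ≤ 1 − λ and ‖B₁ v‖² ≤ 1 − λ', then |⟨u, v⟩| ≤ √λ·√(1−λ') + √(1−λ)·√λ' + √(1−λ)·√(1−λ'). -/
import Mathlib


open scoped InnerProductSpace

/-- Coherence bound between two unit vectors split across three mutually orthogonal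
projections (abstract form of the modulated DPSS coherence bound). -/
theorem coherence_three_projections {H : Type*} [NormedAddCommGroup H]
    [InnerProductSpace ℂ H]
    (B₁ B₂ B₃ : H →ₗ[ℂ] H)
    (h₁sa : ∀ w w' : H, ⟪B₁ w, w'⟫_ℂ = ⟪w, B₁ w'⟫_ℂ)
    (h₂sa : ∀ w w' : H, ⟪B₂ w, w'⟫_ℂ = ⟪w, B₂ w'⟫_ℂ)
    (h₃sa : ∀ w w' : H, ⟪B₃ w, w'⟫_ℂ = ⟪w, B₃ w'⟫_ℂ)
    (h₁idem : B₁ ∘ₗ B₁ = B₁) (h₂idem : B₂ ∘ₗ B₂ = B₂) (h₃idem : B₃ ∘ₗ B₃ = B₃)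
    (hsum : B₁ + B₂ + B₃ = LinearMap.id)
    (u v : H) (hu : ‖u‖ = 1) (hv : ‖v‖ = 1)
    (lam lam' : ℝ)
    (hB1u : ‖B₁ u‖ ^ 2 = lam) (hB2v : ‖B₂ v‖ ^ 2 = lam')
    (hB2u : ‖B₂ u‖ ^ 2 ≤ 1 - lam) (hB1v : ‖B₁ v‖ ^ 2 ≤ 1 - lam') :
    ‖⟪u, v⟫_ℂ‖ ≤ Real.sqrt lam * Real.sqrt (1 - lam')
      + Real.sqrt (1 - lam) * Real.sqrt lam'
      + Real.sqrt (1 - lam) * Real.sqrt (1 - lam') := by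
  have key : ∀ w w' : H,
      ⟪w, w'⟫_ℂ = ⟪B₁ w, B₁ w'⟫_ℂ + ⟪B₂ w, B₂ w'⟫_ℂ + ⟪B₃ w, B₃ w'⟫_ℂ := by
    intro w w'
    have e1 : ⟪B₁ w, B₁ w'⟫_ℂ = ⟪w, B₁ w'⟫_ℂ := by
      rw [h₁sa, ← LinearMap.comp_apply, h₁idem]
    have e2 : ⟪B₂ w, B₂ w'⟫_ℂ = ⟪w, B₂ w'⟫_ℂ := by
      rw [h₂sa, ← LinearMap.comp_apply, h₂idem]
    have e3 : ⟪B₃ w, B₃ w'⟫_ℂ = ⟪w, B₃ w'⟫_ℂ := by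
      rw [h₃sa, ← LinearMap.comp_apply, h₃idem]
    rw [e1, e2, e3, ← inner_add_right, ← inner_add_right]
    have : B₁ w' + B₂ w' + B₃ w' = w' := by
      have := LinearMap.congr_fun hsum w'
      simpa using this
    rw [this]
  have pyth : ∀ w : H, ‖B₁ w‖ ^ 2 + ‖B₂ w‖ ^ 2 + ‖B₃ w‖ ^ 2 = ‖w‖ ^ 2 := by
    intro w
    have h := key w w
    have h' := congrArg Complex.re h
    simpa [← @inner_self_eq_norm_sq ℂ] using h'.symm
  have hpu := pyth u
  have hpv := pyth v
  rw [hu] at hpu; rw [hv] at hpv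
  have hB3u : ‖B₃ u‖ ^ 2 ≤ 1 - lam := by nlinarith [sq_nonneg ‖B₂ u‖]
  have hB3v : ‖B₃ v‖ ^ 2 ≤ 1 - lam' := by nlinarith [sq_nonneg ‖B₁ v‖]
  have hlam : Real.sqrt lam = ‖B₁ u‖ := by
    rw [← hB1u]; exact Real.sqrt_sq (norm_nonneg _)
  have hlam' : Real.sqrt lam' = ‖B₂ v‖ := by
    rw [← hB2v]; exact Real.sqrt_sq (norm_nonneg _)
  have sqle : ∀ (x : H) (c : ℝ), ‖x‖ ^ 2 ≤ c → ‖x‖ ≤ Real.sqrt c := by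
    intro x c hc
    have := Real.sqrt_le_sqrt hc
    rwa [Real.sqrt_sq (norm_nonneg _)] at this
  have hb1v := sqle _ _ hB1v
  have hb2u := sqle _ _ hB2u
  have hb3u := sqle _ _ hB3u
  have hb3v := sqle _ _ hB3v
  calc ‖⟪u, v⟫_ℂ‖ = ‖⟪B₁ u, B₁ v⟫_ℂ + ⟪B₂ u, B₂ v⟫_ℂ + ⟪B₃ u, B₃ v⟫_ℂ‖ := by
        rw [key u v]
    _ ≤ ‖⟪B₁ u, B₁ v⟫_ℂ‖ + ‖⟪B₂ u, B₂ v⟫_ℂ‖ + ‖⟪B₃ u, B₃ v⟫_ℂ‖ :=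
        norm_add₃_le
    _ ≤ ‖B₁ u‖ * ‖B₁ v‖ + ‖B₂ u‖ * ‖B₂ v‖ + ‖B₃ u‖ * ‖B₃ v‖ := by
        gcongr <;> exact norm_inner_le_norm _ _
    _ ≤ Real.sqrt lam * Real.sqrt (1 - lam')
      + Real.sqrt (1 - lam) * Real.sqrt lam'
      + Real.sqrt (1 - lam) * Real.sqrt (1 - lam') := by
        rw [hlam, hlam']
        gcongr
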